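/- For every ρ > 0 and every integer n ≥ 1, if λ' ∈ Λ'∖{0} and there exists (ω₁, ω') ∈ C_∞ × Ω^{r−1}_n with |ω₁| ≤ ρ and |ω₁ + λ'ω'| ≤ ρ, then |λ'| ≤ ρ·|π|^{−n}·|ξ|^{−1}, where |λ'| denotes the maximum of the absolute values of the entries of λ'. Consequently the set of such λ' is finite, i.e. the translation action of Λ' on C_∞ × Ω^{r−1} given by (ω₁,ω') ↦ (ω₁ + λ'ω', ω') is discontinuous on the sets B(0,ρ) × Ω^{r−1}_n. -/

import Mathlib

noncomputable section

namespace Paper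

/-- The sup-norm `|ω| = max_i |ω_i|` of a vector. -/
noncomputable def supNorm {K : Type*} [NormedField K] {m : ℕ} (ω : Fin m → K) : ℝ :=
  ⨆ i, ‖ω i‖

/-- A linear form with coefficients `ℓ i` in `F_∞` is unimodular if its largest
coefficient has absolute value `1`. -/
def Unimodular {K : Type*} [NormedField K] (Finf : Subfield K) {m : ℕ} (ℓ : Fin m → K) : Prop :=
  (∀ i, ℓ i ∈ Finf) ∧ supNorm ℓ = 1

/-- `h(ω) = |ω|⁻¹ · inf {|ℓ(ω)| : ℓ a unimodular F_∞-linear form}`. -/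
noncomputable def hOm {K : Type*} [NormedField K] (Finf : Subfield K) {m : ℕ}
    (ω : Fin m → K) : ℝ :=
  (supNorm ω)⁻¹ *
    sInf {x : ℝ | ∃ ℓ : Fin m → K, Unimodular Finf ℓ ∧ x = ‖∑ i, ℓ i * ω i‖}

/-- The Drinfeld period domain `Ω^{m+1}`: vectors with `F_∞`-linearly independent entries
and last entry `ξ`. -/
def Omega {K : Type*} [NormedField K] (Finf : Subfield K) (ξ : K) (m : ℕ) :
    Set (Fin (m + 1) → K) :=
  {ω | (∀ c : Fin (m + 1) → K, (∀ i, c i ∈ Finf) → ∑ i, c i * ω i = 0 → ∀ i, c i = 0) ∧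
    ω (Fin.last m) = ξ}

/-- `Ω^{m+1}_n = {ω ∈ Ω^{m+1} : h(ω) ≥ |π|^n}` where `|π| = q⁻¹`. -/
def OmegaN {K : Type*} [NormedField K] (Finf : Subfield K) (ξ : K) (q : ℕ) (m n : ℕ) :
    Set (Fin (m + 1) → K) :=
  {ω | ω ∈ Omega Finf ξ m ∧ ((q : ℝ))⁻¹ ^ n ≤ hOm Finf ω}

/-- The automorphy factor `j(γ,ω) = ξ⁻¹·(last entry of γω)`. -/
noncomputable def jmap {K : Type*} [NormedField K] (ξ : K) {m : ℕ}
    (γ : Matrix (Fin (m + 1)) (Fin (m + 1)) K) (ω : Fin (m + 1) → K) : K :=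
  ξ⁻¹ * (γ.mulVec ω) (Fin.last m)

/-- The action `γ(ω) = j(γ,ω)⁻¹·γω` of `GL_{m+1}(F_∞)` on `Ω^{m+1}`. -/
noncomputable def gact {K : Type*} [NormedField K] (ξ : K) {m : ℕ}
    (γ : Matrix (Fin (m + 1)) (Fin (m + 1)) K) (ω : Fin (m + 1) → K) : Fin (m + 1) → K :=
  fun i => (jmap ξ γ ω)⁻¹ * (γ.mulVec ω) i

/-- A subgroup `H` of `(K,+)` is strongly discrete if its intersection with every ball of
finite radius is finite. -/
def StronglyDiscrete {K : Type*} [NormedField K] (H : AddSubgroup K) : Prop :=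
  ∀ ρ : ℝ, 0 < ρ → {z : K | z ∈ H ∧ ‖z‖ ≤ ρ}.Finite

/-- The exponential function `e_H(z) = z·∏_{h ∈ H∖{0}} (1 − z/h)` associated to a strongly
discrete subgroup `H ⊂ K`. -/
noncomputable def eH {K : Type*} [NormedField K] (H : AddSubgroup K) (z : K) : K :=
  z * ∏' h : {x : K // x ∈ H ∧ x ≠ 0}, (1 - z / h.1)

/-- The additive homomorphism `λ' ↦ λ'ω' = ∑ i, λ'_i ω'_i` (matrix product of a row vector
with a column vector).  `Λ'ω'` is its image `Λ'.map (pairHom ω')`. -/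
def pairHom {K : Type*} [NormedField K] {m : ℕ} (ω' : Fin m → K) : (Fin m → K) →+ K where
  toFun lam := ∑ i, lam i * ω' i
  map_zero' := by simp
  map_add' x y := by simp [add_mul, Finset.sum_add_distrib]

/-- `F_∞^{m}ω' = {xω' : x ∈ F_∞^m} ⊂ K`. -/
def Fspan {K : Type*} [NormedField K] (Finf : Subfield K) {m : ℕ} (ω' : Fin m → K) : Set K :=
  {z | ∃ c : Fin m → K, (∀ i, c i ∈ Finf) ∧ z = ∑ i, c i * ω' i}

/-- `A^m ⊂ K^m`, the additive group of vectors with entries in `A`. -/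
def Avec {K : Type*} [NormedField K] (A : Subring K) (m : ℕ) : AddSubgroup (Fin m → K) where
  carrier := {v | ∀ i, v i ∈ A}
  zero_mem' := by intro i; exact A.zero_mem
  add_mem' := by intro a b ha hb i; exact A.add_mem (ha i) (hb i)
  neg_mem' := by intro a ha i; exact A.neg_mem (ha i)

section AuxLemmas
variable {K : Type*} [NormedField K] {m : ℕ}

lemma norm_le_supNorm (v : Fin (m+1) → K) (i : Fin (m+1)) : ‖v i‖ ≤ supNorm v :=
  le_ciSup (Set.Finite.bddAbove (Set.finite_range fun i => ‖v i‖)) i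

lemma supNorm_le {v : Fin (m+1) → K} {C : ℝ} (h : ∀ i, ‖v i‖ ≤ C) : supNorm v ≤ C :=
  ciSup_le h

lemma exists_supNorm_eq (v : Fin (m+1) → K) :
    ∃ i, supNorm v = ‖v i‖ ∧ ∀ j, ‖v j‖ ≤ ‖v i‖ := by
  obtain ⟨i, hi⟩ := Finite.exists_max (fun i => ‖v i‖)
  exact ⟨i, le_antisymm (supNorm_le hi) (norm_le_supNorm v i), hi⟩

lemma fq_finite (q : ℕ) (hq : 2 ≤ q) (Fq : Subfield K)
    (hFq : (Fq : Set K) = {x : K | x ^ q = x}) : (Fq : Set K).Finite := by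
  rw [hFq]
  have : {x : K | x ^ q = x} = {x : K | (Polynomial.X ^ q - Polynomial.X : Polynomial K).IsRoot x} := by
    ext x
    simp [Polynomial.IsRoot, sub_eq_zero]
  rw [this]
  apply Polynomial.finite_setOf_isRoot
  intro h
  have h2 : (Polynomial.X ^ q - Polynomial.X : Polynomial K).coeff q = 1 := by
    rw [Polynomial.coeff_sub, Polynomial.coeff_X_pow, Polynomial.coeff_X]
    have : ¬ (1 = q) := by omega
    simp [this]
  rw [h] at h2
  simp at h2

lemma fq_norm (q : ℕ) (hq : 2 ≤ q) (Fq : Subfield K)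
    (hFq : (Fq : Set K) = {x : K | x ^ q = x}) {x : K} (hx : x ∈ Fq) (hx0 : x ≠ 0) :
    ‖x‖ = 1 := by
  have hxq : x ^ q = x := by
    have : x ∈ (Fq : Set K) := hx
    rwa [hFq] at this
  have hnq : ‖x‖ ^ q = ‖x‖ := by rw [← norm_pow, hxq]
  have h0 : 0 < ‖x‖ := norm_pos_iff.mpr hx0
  rcases lt_trichotomy ‖x‖ 1 with h | h | h
  · exfalso
    have : ‖x‖ ^ q < ‖x‖ ^ 1 := pow_lt_pow_right_of_lt_one₀ h0 h (by omega)
    rw [hnq, pow_one] at this; exact lt_irrefl _ this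
  · exact h
  · exfalso
    have : ‖x‖ ^ 1 < ‖x‖ ^ q := pow_lt_pow_right₀ h (by omega)
    rw [hnq, pow_one] at this; exact lt_irrefl _ this

lemma fq_norm_le (q : ℕ) (hq : 2 ≤ q) (Fq : Subfield K)
    (hFq : (Fq : Set K) = {x : K | x ^ q = x}) {x : K} (hx : x ∈ Fq) :
    ‖x‖ ≤ 1 := by
  rcases eq_or_ne x 0 with h | h
  · simp [h]
  · exact le_of_eq (fq_norm q hq Fq hFq hx h)

lemma mem_closure_poly (t : K) (Fq : Subfield K) {a : K}
    (ha : a ∈ Subring.closure ((Fq : Set K) ∪ {t})) :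
    ∃ P : Polynomial K, (∀ i, P.coeff i ∈ Fq) ∧ P.eval t = a := by
  induction ha using Subring.closure_induction with
  | mem x hx =>
    rcases hx with hx | hx
    · exact ⟨Polynomial.C x, fun i => by
        rcases eq_or_ne i 0 with h | h
        · simpa [h] using hx
        · simpa [Polynomial.coeff_C, h] using zero_mem Fq, by simp⟩
    · refine ⟨Polynomial.X, fun i => ?_, by simpa using hx.symm⟩
      rw [Polynomial.coeff_X]
      split
      · exact one_mem Fq
      · exact zero_mem Fq
  | zero => exact ⟨0, fun i => by simpa using zero_mem Fq, by simp⟩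
  | one => exact ⟨1, fun i => by
      rcases eq_or_ne i 0 with h | h
      · simpa [Polynomial.coeff_one, h] using one_mem Fq
      · simpa [Polynomial.coeff_one, h] using zero_mem Fq, by simp⟩
  | add x y hx hy ihx ihy =>
    obtain ⟨P, hP, hPe⟩ := ihx
    obtain ⟨Q, hQ, hQe⟩ := ihy
    exact ⟨P + Q, fun i => by simpa using add_mem (hP i) (hQ i), by simp [hPe, hQe]⟩
  | neg x hx ihx =>
    obtain ⟨P, hP, hPe⟩ := ihx
    exact ⟨-P, fun i => by simpa using neg_mem (hP i), by simp [hPe]⟩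
  | mul x y hx hy ihx ihy =>
    obtain ⟨P, hP, hPe⟩ := ihx
    obtain ⟨Q, hQ, hQe⟩ := ihy
    refine ⟨P * Q, fun i => ?_, by simp [hPe, hQe]⟩
    rw [Polynomial.coeff_mul]
    exact Subfield.sum_mem _ (fun c _ => mul_mem (hP c.1) (hQ c.2))

lemma eval_norm_lb [IsUltrametricDist K] (q : ℕ) (hq : 2 ≤ q) (t : K) (ht : ‖t‖ = (q : ℝ))
    (Fq : Subfield K) (hFq : (Fq : Set K) = {x : K | x ^ q = x})
    {P : Polynomial K} (hP : ∀ i, P.coeff i ∈ Fq) (hP0 : P ≠ 0) :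
    (q : ℝ) ^ P.natDegree ≤ ‖P.eval t‖ := by
  have hq1 : (1 : ℝ) < (q : ℝ) := by exact_mod_cast lt_of_lt_of_le one_lt_two hq
  have hq0 : (0 : ℝ) < (q : ℝ) := lt_trans one_pos hq1
  set d := P.natDegree with hd
  have heval : P.eval t = (∑ i ∈ Finset.range d, P.coeff i * t ^ i) + P.coeff d * t ^ d := by
    rw [Polynomial.eval_eq_sum_range, Finset.sum_range_succ]
  have hlead : ‖P.coeff d * t ^ d‖ = (q : ℝ) ^ d := by
    rw [norm_mul, norm_pow, ht, fq_norm q hq Fq hFq (hP d) (by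
      simpa [hd] using Polynomial.leadingCoeff_ne_zero.mpr hP0), one_mul]
  have hrest : ‖∑ i ∈ Finset.range d, P.coeff i * t ^ i‖ < (q : ℝ) ^ d := by
    rcases Nat.eq_zero_or_pos d with h0 | h0
    · simp [h0, pow_pos hq0]
    have : ‖∑ i ∈ Finset.range d, P.coeff i * t ^ i‖ ≤ (q : ℝ) ^ (d - 1) := by
      apply IsUltrametricDist.norm_sum_le_of_forall_le_of_nonneg (by positivity)
      intro i hi
      rw [Finset.mem_range] at hi
      calc ‖P.coeff i * t ^ i‖ ≤ 1 * (q : ℝ) ^ i := by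
            rw [norm_mul, norm_pow, ht]
            exact mul_le_mul_of_nonneg_right (fq_norm_le q hq Fq hFq (hP i)) (by positivity)
        _ ≤ (q : ℝ) ^ (d - 1) := by
            rw [one_mul]
            exact pow_le_pow_right₀ (le_of_lt hq1) (by omega)
    refine lt_of_le_of_lt this ?_
    exact pow_lt_pow_right₀ hq1 (by omega)
  rw [heval]
  by_contra hc
  push_neg at hc
  have := IsUltrametricDist.norm_add_le_max
    ((∑ i ∈ Finset.range d, P.coeff i * t ^ i) + P.coeff d * t ^ d)
    (-(∑ i ∈ Finset.range d, P.coeff i * t ^ i))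
  simp only [add_neg_cancel_comm, norm_neg] at this
  rw [hlead] at this
  rcases max_cases ‖(∑ i ∈ Finset.range d, P.coeff i * t ^ i) + P.coeff d * t ^ d‖
    ‖∑ i ∈ Finset.range d, P.coeff i * t ^ i‖ with ⟨h1, _⟩ | ⟨h1, _⟩ <;> rw [h1] at this <;>
    linarith

lemma finite_A_ball [IsUltrametricDist K] (q : ℕ) (hq : 2 ≤ q) (t : K) (ht : ‖t‖ = (q : ℝ))
    (Fq : Subfield K) (hFq : (Fq : Set K) = {x : K | x ^ q = x})
    (A : Subring K) (hA : A = Subring.closure ((Fq : Set K) ∪ {t}))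
    (C : ℝ) : {a : K | a ∈ A ∧ ‖a‖ ≤ C}.Finite := by
  have hq1 : (1 : ℝ) < (q : ℝ) := by exact_mod_cast lt_of_lt_of_le one_lt_two hq
  obtain ⟨D, hD⟩ : ∃ D : ℕ, C < (q : ℝ) ^ D := pow_unbounded_of_one_lt C hq1
  have key : {a : K | a ∈ A ∧ ‖a‖ ≤ C} ⊆
      (fun c : Fin (D + 1) → K => ∑ i, c i * t ^ (i : ℕ)) ''
        (Set.pi Set.univ (fun _ : Fin (D + 1) => (Fq : Set K))) := by
    rintro a ⟨haA, haC⟩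
    rcases eq_or_ne a 0 with rfl | ha0
    · exact ⟨0, fun i _ => zero_mem Fq, by simp⟩
    obtain ⟨P, hP, hPe⟩ := mem_closure_poly t Fq (hA ▸ haA)
    have hP0 : P ≠ 0 := fun h => ha0 (by rw [← hPe, h, Polynomial.eval_zero])
    have hdeg : P.natDegree < D + 1 := by
      by_contra hc
      push_neg at hc
      have h1 := eval_norm_lb q hq t ht Fq hFq hP hP0
      have h2 : (q : ℝ) ^ D ≤ (q : ℝ) ^ P.natDegree :=
        pow_le_pow_right₀ (le_of_lt hq1) (by omega)
      rw [hPe] at h1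
      linarith
    refine ⟨fun i => P.coeff i, fun i _ => hP i, ?_⟩
    rw [← hPe, Polynomial.eval_eq_sum_range' hdeg, Finset.sum_range fun i => P.coeff i * t ^ i]
  refine Set.Finite.subset (Set.Finite.image _ (Set.Finite.pi fun _ => ?_)) key
  exact fq_finite q hq Fq hFq

end AuxLemmas
section Main
variable {K : Type*} [NormedField K] [IsUltrametricDist K] {s : ℕ}

lemma bound_part (q : ℕ) (hq : 2 ≤ q) (F Finf : Subfield K)
    (hFinf : (Finf : Set K) = closure (F : Set K)) (ξ : K) (hξ : ξ ≠ 0)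
    (ρ : ℝ) (hρ : 0 < ρ) (n : ℕ)
    {lam : Fin (s+1) → K} (hlamF : ∀ i, lam i ∈ F) (hlam0 : lam ≠ 0)
    {ω' : Fin (s+1) → K} (hω' : ω' ∈ OmegaN Finf ξ q s n)
    {ω₁ : K} (h1 : ‖ω₁‖ ≤ ρ) (h2 : ‖ω₁ + pairHom ω' lam‖ ≤ ρ) :
    supNorm lam ≤ ρ * (q : ℝ) ^ n * ‖ξ‖⁻¹ := by
  have hq0 : (0 : ℝ) < (q : ℝ) := by exact_mod_cast lt_of_lt_of_le two_pos hq
  have hFsub : ∀ x ∈ F, x ∈ Finf := fun x hx => by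
    have : x ∈ (Finf : Set K) := by rw [hFinf]; exact subset_closure hx
    exact this
  obtain ⟨i₀, hsup, hmax⟩ := exists_supNorm_eq lam
  have hi₀ : lam i₀ ≠ 0 := by
    intro h
    apply hlam0
    funext j
    have hj := hmax j
    rw [h, norm_zero] at hj
    exact norm_le_zero_iff.mp hj
  have ha : 0 < ‖lam i₀‖ := norm_pos_iff.mpr hi₀
  set ℓ : Fin (s+1) → K := fun i => (lam i₀)⁻¹ * lam i with hℓ
  have hℓuni : Unimodular Finf ℓ := by
    constructor
    · intro i
      exact hFsub _ (mul_mem (inv_mem (hlamF i₀)) (hlamF i))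
    · refine le_antisymm (supNorm_le fun i => ?_) ?_
      · rw [hℓ]
        simp only [norm_mul, norm_inv]
        calc ‖lam i₀‖⁻¹ * ‖lam i‖ ≤ ‖lam i₀‖⁻¹ * ‖lam i₀‖ :=
              mul_le_mul_of_nonneg_left (hmax i) (by positivity)
          _ = 1 := inv_mul_cancel₀ (ne_of_gt ha)
      · have hone : ‖ℓ i₀‖ = 1 := by
          rw [hℓ]
          simp [inv_mul_cancel₀ hi₀]
        rw [← hone]
        exact norm_le_supNorm ℓ i₀
  set S := {x : ℝ | ∃ ℓ' : Fin (s+1) → K, Unimodular Finf ℓ' ∧ x = ‖∑ i, ℓ' i * ω' i‖} with hS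
  have hVS : ‖∑ i, ℓ i * ω' i‖ ∈ S := ⟨ℓ, hℓuni, rfl⟩
  have hbdd : BddBelow S := ⟨0, by rintro x ⟨l, -, rfl⟩; exact norm_nonneg _⟩
  have hSV : sInf S ≤ ‖∑ i, ℓ i * ω' i‖ := csInf_le hbdd hVS
  have hrfl : hOm Finf ω' = (supNorm ω')⁻¹ * sInf S := rfl
  have hh : ((q : ℝ))⁻¹ ^ n ≤ (supNorm ω')⁻¹ * sInf S := by rw [← hrfl]; exact hω'.2
  have hξn : ‖ξ‖ ≤ supNorm ω' := by
    have hlast := hω'.1.2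
    rw [← hlast]
    exact norm_le_supNorm ω' (Fin.last s)
  have hξ0 : 0 < ‖ξ‖ := norm_pos_iff.mpr hξ
  have hsupω : 0 < supNorm ω' := lt_of_lt_of_le hξ0 hξn
  have h3 : ((q : ℝ))⁻¹ ^ n * supNorm ω' ≤ sInf S := by
    have hm := mul_le_mul_of_nonneg_right hh (le_of_lt hsupω)
    have hring : ((supNorm ω')⁻¹ * sInf S) * supNorm ω' = sInf S := by
      field_simp
    rwa [hring] at hm
  have hpair : ‖(pairHom ω' lam : K)‖ ≤ ρ := by
    have hdecomp : (pairHom ω' lam : K) = (ω₁ + pairHom ω' lam) + (-ω₁) := by ring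
    rw [hdecomp]
    refine le_trans (IsUltrametricDist.norm_add_le_max _ _) ?_
    rw [norm_neg]
    exact max_le h2 h1
  have hVval : ‖∑ i, ℓ i * ω' i‖ = ‖lam i₀‖⁻¹ * ‖(pairHom ω' lam : K)‖ := by
    have : ∑ i, ℓ i * ω' i = (lam i₀)⁻¹ * ∑ i, lam i * ω' i := by
      rw [Finset.mul_sum]
      exact Finset.sum_congr rfl fun i _ => by rw [hℓ, mul_assoc]
    rw [this, norm_mul, norm_inv]
    rfl
  have hchain : ((q : ℝ))⁻¹ ^ n * ‖ξ‖ ≤ ‖lam i₀‖⁻¹ * ρ := by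
    calc ((q : ℝ))⁻¹ ^ n * ‖ξ‖ ≤ ((q : ℝ))⁻¹ ^ n * supNorm ω' :=
          mul_le_mul_of_nonneg_left hξn (by positivity)
      _ ≤ sInf S := h3
      _ ≤ ‖∑ i, ℓ i * ω' i‖ := hSV
      _ = ‖lam i₀‖⁻¹ * ‖(pairHom ω' lam : K)‖ := hVval
      _ ≤ ‖lam i₀‖⁻¹ * ρ := mul_le_mul_of_nonneg_left hpair (by positivity)
  have key : ‖lam i₀‖ * (((q : ℝ))⁻¹ ^ n * ‖ξ‖) ≤ ρ := by
    have hm := mul_le_mul_of_nonneg_left hchain (le_of_lt ha)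
    have hring : ‖lam i₀‖ * (‖lam i₀‖⁻¹ * ρ) = ρ := by field_simp
    rwa [hring] at hm
  have hposd : 0 < ((q : ℝ))⁻¹ ^ n * ‖ξ‖ := mul_pos (pow_pos (inv_pos.mpr hq0) n) hξ0
  have heq : ρ * (q : ℝ) ^ n * ‖ξ‖⁻¹ = ρ / (((q : ℝ))⁻¹ ^ n * ‖ξ‖) := by
    rw [inv_pow]
    field_simp
  rw [hsup, heq]
  exact (le_div_iff₀ hposd).mpr key

lemma finite_ball_lattice (q : ℕ) (hq : 2 ≤ q) (t : K) (ht : ‖t‖ = (q : ℝ))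
    (Fq : Subfield K) (hFq : (Fq : Set K) = {x : K | x ^ q = x})
    (A : Subring K) (hA : A = Subring.closure ((Fq : Set K) ∪ {t}))
    (Λ' : AddSubgroup (Fin (s + 1) → K))
    (hco1 : (Λ' ⊓ Avec A (s + 1)).relIndex Λ' ≠ 0)
    (C : ℝ) : {lam : Fin (s+1) → K | lam ∈ Λ' ∧ supNorm lam ≤ C}.Finite := by
  classical
  set H := (Λ' ⊓ Avec A (s + 1)).addSubgroupOf Λ' with hH
  have hQfin : Finite (↥Λ' ⧸ H) := Nat.finite_of_card_ne_zero hco1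
  set S₀ : Set (Fin (s+1) → K) :=
    Set.pi Set.univ (fun _ : Fin (s+1) => {a : K | a ∈ A ∧ ‖a‖ ≤ C}) with hS₀
  have hS₀fin : S₀.Finite := Set.Finite.pi fun _ => finite_A_ball q hq t ht Fq hFq A hA C
  set T := {lam : Fin (s+1) → K | lam ∈ Λ' ∧ supNorm lam ≤ C} with hT
  rw [← Set.finite_coe_iff]
  haveI := hS₀fin.to_subtype
  let g : ↥T → ↥Λ' ⧸ H := fun x => QuotientAddGroup.mk ⟨x.1, x.2.1⟩
  let σ : (↥Λ' ⧸ H) → Fin (s+1) → K := fun c =>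
    if h : ∃ x : ↥T, g x = c then (h.choose).1 else 0
  have hσ : ∀ x : ↥T, (σ (g x)) ∈ T ∧ x.1 - σ (g x) ∈ Λ' ⊓ Avec A (s+1) := by
    intro x
    have hex : ∃ y : ↥T, g y = g x := ⟨x, rfl⟩
    have hval : σ (g x) = hex.choose.1 := by
      simp only [σ]
      exact dif_pos hex
    have hchoose : g hex.choose = g x := hex.choose_spec
    refine ⟨by rw [hval]; exact hex.choose.2, ?_⟩
    have h0 : (-(⟨hex.choose.1, hex.choose.2.1⟩ : ↥Λ') + (⟨x.1, x.2.1⟩ : ↥Λ')) ∈ H :=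
      QuotientAddGroup.eq.mp hchoose
    have h1 : ((-(⟨hex.choose.1, hex.choose.2.1⟩ : ↥Λ') + (⟨x.1, x.2.1⟩ : ↥Λ') : ↥Λ') :
        Fin (s+1) → K) ∈ Λ' ⊓ Avec A (s+1) := h0
    have h2 : ((-(⟨hex.choose.1, hex.choose.2.1⟩ : ↥Λ') + (⟨x.1, x.2.1⟩ : ↥Λ') : ↥Λ') :
        Fin (s+1) → K) = x.1 - σ (g x) := by
      rw [hval]
      simp [neg_add_eq_sub]
    rwa [h2] at h1
  have hmem : ∀ x : ↥T, x.1 - σ (g x) ∈ S₀ := by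
    intro x
    obtain ⟨hσT, hσH⟩ := hσ x
    intro i _
    have hAi : (x.1 - σ (g x)) i ∈ A := (AddSubgroup.mem_inf.mp hσH).2 i
    refine ⟨hAi, ?_⟩
    have : (x.1 - σ (g x)) i = x.1 i + (-(σ (g x) i)) := by
      simp [sub_eq_add_neg]
    rw [this]
    refine le_trans (IsUltrametricDist.norm_add_le_max _ _) ?_
    rw [norm_neg]
    exact max_le (le_trans (norm_le_supNorm x.1 i) x.2.2)
      (le_trans (norm_le_supNorm (σ (g x)) i) hσT.2)
  let Φ : ↥T → (↥Λ' ⧸ H) × ↥S₀ := fun x => (g x, ⟨x.1 - σ (g x), hmem x⟩)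
  have hinj : Function.Injective Φ := by
    intro x y h
    have h1 : g x = g y := congrArg Prod.fst h
    have h2 : x.1 - σ (g x) = y.1 - σ (g y) := congrArg (fun z => (Prod.snd z).1) h
    rw [h1] at h2
    exact Subtype.ext (sub_left_inj.mp h2)
  exact Finite.of_injective Φ hinj

end Main

/-- (From the proof of Proposition 4.5.)  For `ρ > 0` and `n ≥ 1`: if
`λ' ∈ Λ'∖{0}` and there exists `(ω₁, ω') ∈ C_∞ × Ω^{r−1}_n` with `|ω₁| ≤ ρ` and
`|ω₁ + λ'ω'| ≤ ρ`, then `|λ'| ≤ ρ·|π|^{−n}·|ξ|⁻¹ = ρ·q^n·|ξ|⁻¹`.  Consequently the set of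
such `λ'` is finite (discontinuity of the translation action on `B(0,ρ) × Ω^{r−1}_n`). -/
theorem statement11
    (p k q : ℕ) (hp : p.Prime) (hqpk : q = p ^ k) (hk : 0 < k)
    {K : Type*} [NormedField K] [CompleteSpace K] [IsAlgClosed K] [IsUltrametricDist K]
    [CharP K p]
    (t : K) (ht : ‖t‖ = (q : ℝ))
    (Fq : Subfield K) (hFq : (Fq : Set K) = {x : K | x ^ q = x})
    (F : Subfield K) (hF : F = Subfield.closure ((Fq : Set K) ∪ {t}))
    (A : Subring K) (hA : A = Subring.closure ((Fq : Set K) ∪ {t}))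
    (Finf : Subfield K) (hFinf : (Finf : Set K) = closure (F : Set K))
    (ξ : K) (hξ : ξ ≠ 0)
    (s : ℕ) (Λ' : AddSubgroup (Fin (s + 1) → K))
    (hΛ'F : ∀ lam ∈ Λ', ∀ i, lam i ∈ F)
    (hco1 : (Λ' ⊓ Avec A (s + 1)).relIndex Λ' ≠ 0)
    (hco2 : (Λ' ⊓ Avec A (s + 1)).relIndex (Avec A (s + 1)) ≠ 0)
    (ρ : ℝ) (hρ : 0 < ρ) (n : ℕ) (hn : 1 ≤ n) :
    (∀ lam ∈ Λ', lam ≠ 0 →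
      (∃ ω₁ : K, ∃ ω' ∈ OmegaN Finf ξ q s n,
        ‖ω₁‖ ≤ ρ ∧ ‖ω₁ + pairHom ω' lam‖ ≤ ρ) →
      supNorm lam ≤ ρ * (q : ℝ) ^ n * ‖ξ‖⁻¹) ∧
    {lam : Fin (s + 1) → K | lam ∈ Λ' ∧
      ∃ ω₁ : K, ∃ ω' ∈ OmegaN Finf ξ q s n,
        ‖ω₁‖ ≤ ρ ∧ ‖ω₁ + pairHom ω' lam‖ ≤ ρ}.Finite := by
  have hq2 : 2 ≤ q := by
    rw [hqpk]
    calc 2 ≤ p := hp.two_le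
      _ ≤ p ^ k := Nat.le_self_pow (by omega) p
  constructor
  · rintro lam hlam hlam0 ⟨ω₁, ω', hω', h1, h2⟩
    exact bound_part q hq2 F Finf hFinf ξ hξ ρ hρ n (hΛ'F lam hlam) hlam0 hω' h1 h2
  · have hsub : {lam : Fin (s + 1) → K | lam ∈ Λ' ∧
        ∃ ω₁ : K, ∃ ω' ∈ OmegaN Finf ξ q s n,
          ‖ω₁‖ ≤ ρ ∧ ‖ω₁ + pairHom ω' lam‖ ≤ ρ} ⊆
        {lam : Fin (s + 1) → K | lam ∈ Λ' ∧ supNorm lam ≤ ρ * (q : ℝ) ^ n * ‖ξ‖⁻¹} ∪ {0} := by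
      rintro lam ⟨hlam, ω₁, ω', hω', h1, h2⟩
      rcases eq_or_ne lam 0 with rfl | h0
      · exact Or.inr rfl
      · exact Or.inl ⟨hlam,
          bound_part q hq2 F Finf hFinf ξ hξ ρ hρ n (hΛ'F lam hlam) h0 hω' h1 h2⟩
    exact Set.Finite.subset
      ((finite_ball_lattice q hq2 t ht Fq hFq A hA Λ' hco1 (ρ * (q : ℝ) ^ n * ‖ξ‖⁻¹)).union
        (Set.finite_singleton 0)) hsub

end Paper
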